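/- Let X be a measurable space, let E := EuclideanSpace ℝ (Fin d) (with its Borel σ-algebra), and let a group G act on X measurably and on E in such a way that for each g ∈ G the map y ↦ g • y is (the underlying map of) a continuous affine map E → E over ℝ. Let k be a Markov kernel from X to E that is G-equivariant (for all g, x, k(g • x) equals the pushforward of k(x) under y ↦ g • y), and assume the identity function y ↦ y is Bochner integrable with respect to k(x) for every x. Then the barycenter map b : X → E defined by b(x) := ∫ y ∂k(x) is G-equivariant: b(g • x) = g • b(x) for all g, x. -/

import Mathlib

open MeasureTheory

/-- The expectation (barycenter) operator preserves equivariance with respect to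
affine group actions: if `k` is a `G`-equivariant Markov kernel from `X` to
`E = EuclideanSpace ℝ (Fin d)` and each `y ↦ g • y` is a continuous affine map,
then `x ↦ ∫ y ∂k(x)` is `G`-equivariant. -/
theorem barycenter_equivariant
    {X G : Type*} {d : ℕ} [MeasurableSpace X]
    [Group G] [MulAction G X] [MulAction G (EuclideanSpace ℝ (Fin d))]
    (hmX : ∀ g : G, Measurable fun x : X => g • x)
    (haff : ∀ g : G, ∃ A : EuclideanSpace ℝ (Fin d) →ᵃ[ℝ] EuclideanSpace ℝ (Fin d),
      Continuous A ∧ ∀ y : EuclideanSpace ℝ (Fin d), g • y = A y)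
    (k : ProbabilityTheory.Kernel X (EuclideanSpace ℝ (Fin d)))
    [ProbabilityTheory.IsMarkovKernel k]
    (hk : ∀ (g : G) (x : X),
      k (g • x) = (k x).map (fun y : EuclideanSpace ℝ (Fin d) => g • y))
    (hint : ∀ x : X, Integrable (fun y : EuclideanSpace ℝ (Fin d) => y) (k x)) :
    ∀ (g : G) (x : X),
      (∫ y, y ∂(k (g • x))) = g • (∫ y, y ∂(k x)) := by
  intro g x
  obtain ⟨A, hAc, hAe⟩ := haff g
  have hL : Continuous A.linear := by
    rw [AffineMap.decomp'] at *
    exact hAc.sub continuous_const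
  let L : EuclideanSpace ℝ (Fin d) →L[ℝ] EuclideanSpace ℝ (Fin d) := ⟨A.linear, hL⟩
  have hy : ∀ y, A y = L y + A 0 := fun y => congrFun A.decomp y
  rw [hk g x]
  have hmap : (∫ y, y ∂((k x).map (fun y => g • y))) = ∫ y, g • y ∂(k x) :=
    integral_map (by simp only [hAe]; exact hAc.measurable.aemeasurable) aestronglyMeasurable_id
  rw [hmap]
  calc ∫ y, g • y ∂(k x) = ∫ y, (L y + A 0) ∂(k x) :=
        integral_congr_ae (Filter.Eventually.of_forall fun y => (hAe y).trans (hy y))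
    _ = L (∫ y, y ∂(k x)) + A 0 := by
        rw [integral_add (L.integrable_comp (hint x)) (integrable_const _),
          integral_const, probReal_univ, one_smul,
          L.integral_comp_comm (hint x)]
    _ = A (∫ y, y ∂(k x)) := (hy _).symm
    _ = g • (∫ y, y ∂(k x)) := (hAe _).symm
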